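/- arXiv:2112.03856 — 6 statements merged into one kernel-verified Lean document; each statement's English description precedes it below -/
import Mathlib

section
/- In G = ⟨s, t, u | s^a = t^b = u^c = 1, stu = tus = ust⟩, no two elements among s, s^2, ..., s^{a-1}, t, t^2, ..., t^{b-1}, u, u^2, ..., u^{c-1} are conjugate to each other. -/
/-- The relations of the J-group `J(a,b,c)`:
`s^a = t^b = u^c = 1` and `stu = tus = ust`. -/
def jRels (a b c : ℕ) : Set (FreeGroup (Fin 3)) :=
  { FreeGroup.of 0 ^ a, FreeGroup.of 1 ^ b, FreeGroup.of 2 ^ c,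
    (FreeGroup.of 0 * FreeGroup.of 1 * FreeGroup.of 2) *
      (FreeGroup.of 1 * FreeGroup.of 2 * FreeGroup.of 0)⁻¹,
    (FreeGroup.of 0 * FreeGroup.of 1 * FreeGroup.of 2) *
      (FreeGroup.of 2 * FreeGroup.of 0 * FreeGroup.of 1)⁻¹ }

/-- The J-group `J(a,b,c) = ⟨s, t, u | s^a = t^b = u^c = 1, stu = tus = ust⟩`. -/
abbrev JGroup (a b c : ℕ) := PresentedGroup (jRels a b c)

/-- The generator `s` of `J(a,b,c)`. -/
def jS (a b c : ℕ) : JGroup a b c := PresentedGroup.of 0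
/-- The generator `t` of `J(a,b,c)`. -/
def jT (a b c : ℕ) : JGroup a b c := PresentedGroup.of 1
/-- The generator `u` of `J(a,b,c)`. -/
def jU (a b c : ℕ) : JGroup a b c := PresentedGroup.of 2


lemma aux_inj {n : ℕ} {i j : ℕ} (h2 : i < n) (h4 : j < n) (h : (i : ZMod n) = j) : i = j := by
  have := congrArg ZMod.val h
  rwa [ZMod.val_cast_of_lt h2, ZMod.val_cast_of_lt h4] at this

lemma aux_ne {n : ℕ} {i : ℕ} [NeZero n] (h1 : 1 ≤ i) (h2 : i < n) : (i : ZMod n) ≠ 0 := by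
  intro h
  have := congrArg ZMod.val h
  rw [ZMod.val_cast_of_lt h2, ZMod.val_zero] at this
  omega

/-- In `G = ⟨s, t, u | s^a = t^b = u^c = 1, stu = tus = ust⟩`, no two elements among
`s, s², …, s^{a-1}, t, t², …, t^{b-1}, u, u², …, u^{c-1}` are conjugate to each other. -/
theorem stmt2 (a b c : ℕ) (ha : 2 ≤ a) (hb : 2 ≤ b) (hc : 2 ≤ c) :
    (∀ i j : ℕ, 1 ≤ i → i < a → 1 ≤ j → j < a → i ≠ j →
      ¬ IsConj (jS a b c ^ i) (jS a b c ^ j)) ∧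
    (∀ i j : ℕ, 1 ≤ i → i < b → 1 ≤ j → j < b → i ≠ j →
      ¬ IsConj (jT a b c ^ i) (jT a b c ^ j)) ∧
    (∀ i j : ℕ, 1 ≤ i → i < c → 1 ≤ j → j < c → i ≠ j →
      ¬ IsConj (jU a b c ^ i) (jU a b c ^ j)) ∧
    (∀ i j : ℕ, 1 ≤ i → i < a → 1 ≤ j → j < b →
      ¬ IsConj (jS a b c ^ i) (jT a b c ^ j)) ∧
    (∀ i j : ℕ, 1 ≤ i → i < a → 1 ≤ j → j < c →
      ¬ IsConj (jS a b c ^ i) (jU a b c ^ j)) ∧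
    (∀ i j : ℕ, 1 ≤ i → i < b → 1 ≤ j → j < c →
      ¬ IsConj (jT a b c ^ i) (jU a b c ^ j)) := by
  haveI : NeZero a := ⟨by omega⟩
  haveI : NeZero b := ⟨by omega⟩
  haveI : NeZero c := ⟨by omega⟩
  set f : Fin 3 → Multiplicative (ZMod a × ZMod b × ZMod c) :=
    ![Multiplicative.ofAdd (1,0,0), Multiplicative.ofAdd (0,1,0),
      Multiplicative.ofAdd (0,0,1)] with hf
  have hrel : ∀ r ∈ jRels a b c, FreeGroup.lift f r = 1 := by
    intro r hr
    simp only [jRels, Set.mem_insert_iff, Set.mem_singleton_iff] at hr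
    rcases hr with rfl | rfl | rfl | rfl | rfl <;>
      simp only [map_pow, map_mul, map_inv, FreeGroup.lift_apply_of, hf,
        Matrix.cons_val_zero, Matrix.cons_val_one, Matrix.head_cons,
        Matrix.cons_val_two, Matrix.tail_cons]
    case inl =>
      rw [← ofAdd_nsmul, ← ofAdd_zero]; congr 1; ext <;> simp [nsmul_eq_mul]
    case inr.inl =>
      rw [← ofAdd_nsmul, ← ofAdd_zero]; congr 1; ext <;> simp [nsmul_eq_mul]
    case inr.inr.inl =>
      rw [← ofAdd_nsmul, ← ofAdd_zero]; congr 1; ext <;> simp [nsmul_eq_mul]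
    case inr.inr.inr.inl =>
      simp [← ofAdd_add, ← ofAdd_neg]; try abel
    case inr.inr.inr.inr =>
      simp [← ofAdd_add, ← ofAdd_neg]; try abel
  let φ : JGroup a b c →* Multiplicative (ZMod a × ZMod b × ZMod c) := PresentedGroup.toGroup hrel
  have key : ∀ x y : JGroup a b c, IsConj x y → φ x = φ y := by
    intro x y h
    obtain ⟨g, hg⟩ := h
    have h2 := congrArg φ hg.eq
    rw [map_mul, map_mul] at h2
    exact mul_right_cancel ((mul_comm (φ x) (φ (g : JGroup a b c))).trans h2)
  have hS : ∀ i : ℕ, φ (jS a b c ^ i) =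
      Multiplicative.ofAdd ((i : ZMod a), (0 : ZMod b), (0 : ZMod c)) := by
    intro i
    rw [map_pow]
    have : φ (jS a b c) = Multiplicative.ofAdd ((1 : ZMod a), (0 : ZMod b), (0 : ZMod c)) := by
      simp [jS, φ, PresentedGroup.toGroup.of, hf]
    rw [this, ← ofAdd_nsmul]
    congr 1
    simp [Prod.smul_mk, nsmul_eq_mul]
  have hT : ∀ i : ℕ, φ (jT a b c ^ i) =
      Multiplicative.ofAdd ((0 : ZMod a), (i : ZMod b), (0 : ZMod c)) := by
    intro i
    rw [map_pow]
    have : φ (jT a b c) = Multiplicative.ofAdd ((0 : ZMod a), (1 : ZMod b), (0 : ZMod c)) := by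
      simp [jT, φ, PresentedGroup.toGroup.of, hf]
    rw [this, ← ofAdd_nsmul]
    congr 1
    simp [Prod.smul_mk, nsmul_eq_mul]
  have hU : ∀ i : ℕ, φ (jU a b c ^ i) =
      Multiplicative.ofAdd ((0 : ZMod a), (0 : ZMod b), (i : ZMod c)) := by
    intro i
    rw [map_pow]
    have : φ (jU a b c) = Multiplicative.ofAdd ((0 : ZMod a), (0 : ZMod b), (1 : ZMod c)) := by
      simp [jU, φ, PresentedGroup.toGroup.of, hf]
    rw [this, ← ofAdd_nsmul]
    congr 1
    simp [Prod.smul_mk, nsmul_eq_mul]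
  refine ⟨?_, ?_, ?_, ?_, ?_, ?_⟩
  · intro i j h1 h2 h3 h4 hij hconj
    have := key _ _ hconj
    rw [hS, hS] at this
    have := Multiplicative.ofAdd.injective this
    exact hij (aux_inj h2 h4 (congrArg Prod.fst this))
  · intro i j h1 h2 h3 h4 hij hconj
    have := key _ _ hconj
    rw [hT, hT] at this
    have := Multiplicative.ofAdd.injective this
    exact hij (aux_inj h2 h4 (congrArg (fun p => p.2.1) this))
  · intro i j h1 h2 h3 h4 hij hconj
    have := key _ _ hconj
    rw [hU, hU] at this
    have := Multiplicative.ofAdd.injective this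
    exact hij (aux_inj h2 h4 (congrArg (fun p => p.2.2) this))
  · intro i j h1 h2 h3 h4 hconj
    have := key _ _ hconj
    rw [hS, hT] at this
    have := Multiplicative.ofAdd.injective this
    exact aux_ne h1 h2 (congrArg Prod.fst this)
  · intro i j h1 h2 h3 h4 hconj
    have := key _ _ hconj
    rw [hS, hU] at this
    have := Multiplicative.ofAdd.injective this
    exact aux_ne h1 h2 (congrArg Prod.fst this)
  · intro i j h1 h2 h3 h4 hconj
    have := key _ _ hconj
    rw [hT, hU] at this
    have := Multiplicative.ofAdd.injective this
    exact aux_ne h1 h2 (congrArg (fun p => p.2.1) this)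
end

section
/- In G = ⟨s, t, u | s^a = t^b = u^c = 1, stu = tus = ust⟩, the generators s, t, and u have orders exactly a, b, and c respectively. -/
/-- Auxiliary: if `of i ^ n` is a relation and there is a map to `Multiplicative (ZMod n)`
killing all relations and sending `i` to `ofAdd 1`, then `of i` has order exactly `n`. -/
lemma jAux {a b c : ℕ} (n : ℕ) (i : Fin 3)
    (hpow : FreeGroup.of i ^ n ∈ jRels a b c)
    (f : Fin 3 → Multiplicative (ZMod n))
    (hf : f i = Multiplicative.ofAdd 1)
    (hrel : ∀ r ∈ jRels a b c, FreeGroup.lift f r = 1) :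
    orderOf (PresentedGroup.of (rels := jRels a b c) i) = n := by
  have h1 : (PresentedGroup.of (rels := jRels a b c) i) ^ n = 1 := by
    have h : PresentedGroup.mk (jRels a b c) (FreeGroup.of i ^ n) = 1 :=
      (QuotientGroup.eq_one_iff _).mpr (Subgroup.subset_normalClosure hpow)
    rw [map_pow] at h
    exact h
  have hdvd1 : orderOf (PresentedGroup.of (rels := jRels a b c) i) ∣ n :=
    orderOf_dvd_of_pow_eq_one h1
  let φ : JGroup a b c →* Multiplicative (ZMod n) := PresentedGroup.toGroup hrel
  have hφ : φ (PresentedGroup.of i) = Multiplicative.ofAdd 1 := by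
    rw [PresentedGroup.toGroup.of, hf]
  have hdvd2 : n ∣ orderOf (PresentedGroup.of (rels := jRels a b c) i) := by
    have := orderOf_map_dvd φ (PresentedGroup.of (rels := jRels a b c) i)
    rw [hφ] at this
    have ho : orderOf (Multiplicative.ofAdd (1 : ZMod n)) = n := by
      rw [orderOf_ofAdd_eq_addOrderOf, ZMod.addOrderOf_one]
    rwa [ho] at this
  exact Nat.dvd_antisymm hdvd1 hdvd2

lemma pow_ofAdd_one (n : ℕ) : (Multiplicative.ofAdd (1 : ZMod n)) ^ n = 1 := by
  rw [← ofAdd_nsmul, nsmul_eq_mul, mul_one, ZMod.natCast_self, ofAdd_zero]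

/-- In `G = ⟨s, t, u | s^a = t^b = u^c = 1, stu = tus = ust⟩`, the generators `s`, `t`, `u`
have orders exactly `a`, `b`, `c` respectively. -/
theorem stmt3 (a b c : ℕ) (ha : 2 ≤ a) (hb : 2 ≤ b) (hc : 2 ≤ c) :
    orderOf (jS a b c) = a ∧ orderOf (jT a b c) = b ∧ orderOf (jU a b c) = c := by
  refine ⟨?_, ?_, ?_⟩
  · refine jAux a 0 (by simp [jRels]) ![Multiplicative.ofAdd 1, 1, 1] rfl ?_
    intro r hr
    simp only [jRels, Set.mem_insert_iff, Set.mem_singleton_iff] at hr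
    rcases hr with h|h|h|h|h <;> subst h <;> simp [pow_ofAdd_one]
  · refine jAux b 1 (by simp [jRels]) ![1, Multiplicative.ofAdd 1, 1] rfl ?_
    intro r hr
    simp only [jRels, Set.mem_insert_iff, Set.mem_singleton_iff] at hr
    rcases hr with h|h|h|h|h <;> subst h <;> simp [pow_ofAdd_one]
  · refine jAux c 2 (by simp [jRels]) ![1, 1, Multiplicative.ofAdd 1] rfl ?_
    intro r hr
    simp only [jRels, Set.mem_insert_iff, Set.mem_singleton_iff] at hr
    rcases hr with h|h|h|h|h <;> subst h <;> simp [pow_ofAdd_one]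
end

section
/- Let k, n, m ≥ 2 with n and m coprime, let W(k,n,m) be the group presented by generators x₁, ..., xₙ with relations xᵢᵏ = 1 for all i, and x₁x₂⋯ (m factors, indices mod n) = xᵢxᵢ₊₁⋯ (m factors) for all i. Write m = qn + r for the Euclidean division of m by n, and set δ = x₁x₂⋯x_m (indices mod n). Then xᵢδ = δx_{i+r} for all i = 1, ..., n (indices mod n). -/
/-- The word `x_i x_{i+1} ⋯ x_{i+l-1}` (with `l` factors, indices mod `n`) in the free
group on `ZMod n`. -/
def wWord (n l : ℕ) (i : ZMod n) : FreeGroup (ZMod n) :=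
  ((List.range l).map fun j => FreeGroup.of (i + (j : ZMod n))).prod

/-- The relations of the toric reflection group `W(k,n,m)`: `xᵢ^k = 1` for all `i`, and all
the `m`-factor products `x_i x_{i+1} ⋯ x_{i+m-1}` (indices mod `n`) are equal. -/
def wRels (k n m : ℕ) : Set (FreeGroup (ZMod n)) :=
  (Set.range fun i : ZMod n => FreeGroup.of i ^ k) ∪
  (Set.range fun i : ZMod n => wWord n m 1 * (wWord n m i)⁻¹)

/-- The toric reflection group `W(k,n,m)`. -/
abbrev TorGroup (k n m : ℕ) := PresentedGroup (wRels k n m)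

/-- The generator `xᵢ` of `W(k,n,m)`, for `i : ZMod n`. -/
def tx (k n m : ℕ) (i : ZMod n) : TorGroup k n m := PresentedGroup.of i

/-- The product `x_i x_{i+1} ⋯ x_{i+l-1}` (with `l` factors, indices mod `n`) in
`W(k,n,m)`. -/
def txProd (k n m : ℕ) (l : ℕ) (i : ZMod n) : TorGroup k n m :=
  ((List.range l).map fun j => tx k n m (i + (j : ZMod n))).prod

/-- Normal form of `wWord`, with the natural-number cast made explicit. -/
lemma wWord_def (n l : ℕ) (i : ZMod n) :
    wWord n l i
      = ((List.range l).map fun j : ℕ => FreeGroup.of (i + (Nat.cast j : ZMod n))).prod := by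
  rw [wWord]; congr 1
  simp only [List.pure_def, List.bind_eq_flatMap, ← List.map_eq_flatMap, List.map_map]; rfl

/-- Normal form of `txProd`, with the natural-number cast made explicit. -/
lemma txProd_def (k n m l : ℕ) (i : ZMod n) :
    txProd k n m l i
      = ((List.range l).map fun j : ℕ => tx k n m (i + (Nat.cast j : ZMod n))).prod := by
  rw [txProd]; congr 1
  simp only [List.pure_def, List.bind_eq_flatMap, ← List.map_eq_flatMap, List.map_map]; rfl

/-- `txProd` is the image of `wWord` under the quotient map. -/
lemma txProd_eq_map (k n m l : ℕ) (i : ZMod n) :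
    txProd k n m l i
      = QuotientGroup.mk' (Subgroup.normalClosure (wRels k n m)) (wWord n l i) := by
  rw [wWord_def, txProd_def, map_list_prod, List.map_map]
  rfl

/-- All the `m`-factor products are equal in `W(k,n,m)`. -/
lemma txProd_eq (k n m : ℕ) (i : ZMod n) :
    txProd k n m m i = txProd k n m m 1 := by
  rw [txProd_eq_map, txProd_eq_map]
  have h : (QuotientGroup.mk' (Subgroup.normalClosure (wRels k n m)))
      (wWord n m 1 * (wWord n m i)⁻¹) = 1 := by
    rw [QuotientGroup.mk'_apply, QuotientGroup.eq_one_iff]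
    exact Subgroup.subset_normalClosure (Or.inr ⟨i, rfl⟩)
  rw [map_mul, map_inv] at h
  exact (mul_inv_eq_one.mp h).symm

/-- Peel off the first factor of `txProd`. -/
lemma txProd_succ_left (k n m l : ℕ) (i : ZMod n) :
    txProd k n m (l + 1) i = tx k n m i * txProd k n m l (i + 1) := by
  rw [txProd_def, txProd_def, List.prod_range_succ']
  congr 1
  · simp
  · refine congrArg List.prod (List.map_congr_left fun j _ => ?_)
    congr 1; push_cast; ring

/-- Peel off the last factor of `txProd`. -/
lemma txProd_succ_right (k n m l : ℕ) (i : ZMod n) :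
    txProd k n m (l + 1) i = txProd k n m l i * tx k n m (i + l) := by
  rw [txProd_def, txProd_def, List.prod_range_succ]

/-- Let `m = qn + r` be the Euclidean division of `m` by `n`, and set
`δ = x₁x₂⋯x_m` (indices mod `n`) in `W(k,n,m)`. Then `xᵢ δ = δ x_{i+r}` for all `i`. -/
theorem stmt7 (k n m : ℕ) (hk : 2 ≤ k) (hn : 2 ≤ n) (hm : 2 ≤ m)
    (hco : Nat.Coprime n m) :
    ∀ i : ZMod n,
      tx k n m i * txProd k n m m 1 = txProd k n m m 1 * tx k n m (i + ((m % n : ℕ) : ZMod n)) := by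
  intro i
  have hr : ((m % n : ℕ) : ZMod n) = (m : ZMod n) := ZMod.natCast_mod m n
  calc tx k n m i * txProd k n m m 1
      = tx k n m i * txProd k n m m (i + 1) := by rw [txProd_eq k n m (i + 1)]
    _ = txProd k n m (m + 1) i := (txProd_succ_left k n m m i).symm
    _ = txProd k n m m i * tx k n m (i + m) := txProd_succ_right k n m m i
    _ = txProd k n m m 1 * tx k n m (i + ((m % n : ℕ) : ZMod n)) := by
        rw [txProd_eq k n m i, hr]
end

section
/- Let F be a group generated by elements x₁, ..., xₙ (indices mod n). The set of relations xᵢ(x₁x₂⋯x_m) = (x₁x₂⋯x_m)x_{i+m} for all 1 ≤ i ≤ n is equivalent to the set of relations x₁x₂⋯x_m = xⱼxⱼ₊₁⋯xⱼ₊ₘ₋₁ for all j = 2, ..., n, i.e., each set of relations implies the other. -/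
section aux

variable {n : ℕ} {F : Type*} [Group F]

private lemma stmt11_listcoe (n m : ℕ) :
    ((List.range m) >>= fun a : ℕ => (pure ((a : ZMod n)) : List (ZMod n))) =
      (List.range m).map Nat.cast := by
  show ((List.range m).flatMap fun a : ℕ => pure ((a : ZMod n))) = _
  induction List.range m with
  | nil => rfl
  | cons a l ih => simp [List.flatMap, List.flatten] at ih ⊢; exact ih

private lemma stmt11_key (x : ZMod n → F) (m : ℕ) (i : ZMod n) :
    x i * ((List.range m).map fun j : ℕ => x ((i + 1) + ((j : ℕ) : ZMod n))).prod =
      ((List.range m).map fun j : ℕ => x (i + ((j : ℕ) : ZMod n))).prod * x (i + (m : ZMod n)) := by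
  induction m with
  | zero => simp
  | succ m ih =>
    rw [List.range_succ, List.map_append, List.map_append, List.prod_append, List.prod_append,
      ← mul_assoc, ih]
    simp only [List.map_cons, List.map_nil, List.prod_cons, List.prod_nil, mul_one]
    rw [mul_assoc, mul_assoc]
    congr 2 <;> · congr 1 <;> push_cast <;> ring

end aux

/-- Let `F` be a group with elements `x₁, …, xₙ` (indices mod `n`). The set of relations
`xᵢ (x₁⋯x_m) = (x₁⋯x_m) x_{i+m}` for all `i` is equivalent to the set of relations
`x₁⋯x_m = x_j x_{j+1} ⋯ x_{j+m-1}` for all `j` (each product having `m` factors with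
consecutive indices mod `n`). -/
theorem stmt11 (n m : ℕ) (hn : 2 ≤ n) (hm : 2 ≤ m) {F : Type*} [Group F]
    (x : ZMod n → F) :
    (∀ i : ZMod n,
        x i * ((List.range m).map fun j => x (1 + (j : ZMod n))).prod =
          ((List.range m).map fun j => x (1 + (j : ZMod n))).prod * x (i + (m : ZMod n))) ↔
    (∀ i : ZMod n,
        ((List.range m).map fun j => x (1 + (j : ZMod n))).prod =
          ((List.range m).map fun j => x (i + (j : ZMod n))).prod) := by
  have hnz : NeZero n := ⟨by omega⟩
  simp only [stmt11_listcoe, List.map_map, Function.comp_def]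
  set p := ((List.range m).map fun j : ℕ => x (1 + ((j : ℕ) : ZMod n))).prod with hp
  constructor
  · intro h i
    have main : ∀ k : ℕ,
        p = ((List.range m).map fun j : ℕ => x ((1 + (k : ZMod n)) + ((j : ℕ) : ZMod n))).prod := by
      intro k
      induction k with
      | zero => simp [hp]
      | succ k ih =>
        have hk := stmt11_key x m (1 + (k : ZMod n))
        rw [← ih] at hk
        rw [← h (1 + (k : ZMod n))] at hk
        have h2 := mul_left_cancel hk
        rw [← h2]
        congr 2
        funext j
        congr 1
        push_cast
        ring
    have h3 := main (i - 1).val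
    rwa [ZMod.natCast_val, ZMod.cast_id, add_sub_cancel] at h3
  · intro h i
    have hk := stmt11_key x m i
    rw [← h i] at hk
    have h4 : ((List.range m).map fun j : ℕ => x ((i + 1) + ((j : ℕ) : ZMod n))).prod = p :=
      (h (i + 1)).symm
    rw [h4] at hk
    exact hk
end

section
/- Let k, n, m ≥ 2 with n < m and n, m coprime. The quotient of the toric reflection group W(k,n,m) by the normal subgroup generated by c = (x₁x₂⋯xₙ)^m is isomorphic to the alternating subgroup W⁺_{k,n,m} = ⟨a, b | a^k = b^n = (ba⁻¹)^m = 1⟩, via the map sending xᵢ to b^{-i+1} a b^{i-1}. -/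
/-- The relations of the von Dyck-type group `⟨a, b | a^k = b^n = (ba⁻¹)^m = 1⟩`. -/
def vdRels (k n m : ℕ) : Set (FreeGroup (Fin 2)) :=
  { FreeGroup.of 0 ^ k, FreeGroup.of 1 ^ n,
    (FreeGroup.of 1 * (FreeGroup.of 0)⁻¹) ^ m }

/-- The group `W⁺_{k,n,m} = ⟨a, b | a^k = b^n = (ba⁻¹)^m = 1⟩`, the alternating subgroup
of the triangle Coxeter group with labels `k, n, m`. -/
abbrev VonDyck (k n m : ℕ) := PresentedGroup (vdRels k n m)

/-- The generator `a` of `W⁺_{k,n,m}`. -/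
def vA (k n m : ℕ) : VonDyck k n m := PresentedGroup.of 0
/-- The generator `b` of `W⁺_{k,n,m}`. -/
def vB (k n m : ℕ) : VonDyck k n m := PresentedGroup.of 1

namespace Stmt13Aux

lemma coe_list {n : ℕ} (L : List ℕ) :
    (L.flatMap fun (a : ℕ) => [(a : ZMod n)]) = L.map Nat.cast := by
  induction L with
  | nil => rfl
  | cons a t ih => simp [List.flatMap_cons, ih]

lemma wWord_eq (n l : ℕ) (i : ZMod n) :
    wWord n l i = ((List.range l).map fun (j : ℕ) => FreeGroup.of (i + (j : ZMod n))).prod := by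
  unfold wWord
  rw [show ((List.range l : List ℕ) : List (ZMod n)) = (List.range l).map Nat.cast from
    coe_list _, List.map_map]
  rfl

lemma txProd_eq (k n m l : ℕ) (i : ZMod n) :
    txProd k n m l i = ((List.range l).map fun (j : ℕ) => tx k n m (i + (j : ZMod n))).prod := by
  unfold txProd
  rw [show ((List.range l : List ℕ) : List (ZMod n)) = (List.range l).map Nat.cast from
    coe_list _, List.map_map]
  rfl

section Generic
variable {G : Type*} [Group G]

lemma zpow_congr {n : ℕ} {g : G} (hg : g ^ (n : ℤ) = 1) {s t : ℤ}
    (h : (s : ZMod n) = (t : ZMod n)) : g ^ s = g ^ t := by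
  obtain ⟨q, hq⟩ := ((ZMod.intCast_eq_intCast_iff _ _ _).mp h).dvd
  have ht : t = s + n * q := by linarith
  rw [ht, zpow_add, zpow_mul, hg, one_zpow, mul_one]

lemma conj_pow_eq (x g : G) (j : ℕ) : (x * g * x⁻¹) ^ j = x * g ^ j * x⁻¹ := by
  induction j with
  | zero => simp
  | succ j ih => rw [pow_succ, pow_succ, ih]; group

lemma tele (g b : G) : ∀ (l : ℕ) (t : ℤ),
    ((List.range l).map fun (j : ℕ) => b ^ (-(t + (j : ℕ))) * g * b ^ (t + (j : ℕ))).prod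
      = b ^ (-t) * (g * b⁻¹) ^ l * b ^ (t + l) := by
  intro l
  induction l with
  | zero => intro t; simp
  | succ l ih =>
    intro t
    rw [List.range_succ, List.map_append, List.prod_append, ih]
    simp only [List.map_cons, List.map_nil, List.prod_cons, List.prod_nil, mul_one]
    rw [pow_succ]
    push_cast
    generalize (g * b⁻¹) ^ l = X
    group

end Generic

section Tor
variable (k n m : ℕ)

lemma relT {r : FreeGroup (ZMod n)} (hr : r ∈ wRels k n m) :
    PresentedGroup.mk (wRels k n m) r = 1 :=
  (QuotientGroup.eq_one_iff r).mpr (Subgroup.subset_normalClosure hr)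

lemma txProd_eq_mk (l : ℕ) (i : ZMod n) :
    txProd k n m l i = PresentedGroup.mk (wRels k n m) (wWord n l i) := by
  rw [txProd_eq, wWord_eq, map_list_prod, List.map_map]
  rfl

lemma tx_pow (i : ZMod n) : tx k n m i ^ k = 1 := by
  have h := relT k n m (Or.inl ⟨i, rfl⟩)
  rw [map_pow] at h
  exact h

lemma txProd_m (i : ZMod n) : txProd k n m m i = txProd k n m m 1 := by
  have h := relT k n m (Or.inr ⟨i, rfl⟩)
  rw [map_mul, map_inv, mul_inv_eq_one] at h
  rw [txProd_eq_mk, txProd_eq_mk]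
  exact h.symm

lemma txProd_one (i : ZMod n) : txProd k n m 1 i = tx k n m i := by
  rw [txProd_eq, show List.range 1 = [0] from rfl]
  simp

lemma txProd_add (a b : ℕ) (i : ZMod n) :
    txProd k n m (a + b) i = txProd k n m a i * txProd k n m b (i + a) := by
  rw [txProd_eq, txProd_eq, txProd_eq, List.range_add, List.map_append, List.prod_append,
    List.map_map]
  congr 1
  refine congrArg List.prod ?_
  apply List.map_congr_left
  intro j _
  simp only [Function.comp_apply]
  congr 1
  push_cast
  ring

lemma delta_conj (i : ZMod n) :
    tx k n m i * txProd k n m m 1 = txProd k n m m 1 * tx k n m (i + m) := by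
  have h1 : txProd k n m (1 + m) i = tx k n m i * txProd k n m m 1 := by
    rw [txProd_add, txProd_one]
    simp only [Nat.cast_one]
    rw [txProd_m k n m (i + 1)]
  have h2 : txProd k n m (m + 1) i = txProd k n m m 1 * tx k n m (i + m) := by
    rw [txProd_add, txProd_one, txProd_m k n m i]
  rw [← h1, ← h2, Nat.add_comm]

lemma txProd_mul_m (l : ℕ) (i : ZMod n) :
    txProd k n m (l * m) i = txProd k n m m 1 ^ l := by
  induction l generalizing i with
  | zero => rw [Nat.zero_mul, txProd_eq]; simp
  | succ l ih =>
    rw [show (l + 1) * m = m + l * m by ring, txProd_add, ih, txProd_m k n m i, pow_succ']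

lemma txProd_mul_n (l : ℕ) :
    txProd k n m (l * n) 1 = txProd k n m n 1 ^ l := by
  induction l with
  | zero => rw [Nat.zero_mul, txProd_eq]; simp
  | succ l ih =>
    rw [show (l + 1) * n = n + l * n by ring, txProd_add, show ((1 : ZMod n) + n = 1) by
      simp [ZMod.natCast_self], ih, pow_succ']

lemma c_eq_delta_pow : txProd k n m n 1 ^ m = txProd k n m m 1 ^ n := by
  rw [← txProd_mul_n k n m m, Nat.mul_comm, txProd_mul_m k n m n 1]

end Tor



section VD
variable (k n m : ℕ)

lemma relVD {r : FreeGroup (Fin 2)} (hr : r ∈ vdRels k n m) :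
    PresentedGroup.mk (vdRels k n m) r = 1 :=
  (QuotientGroup.eq_one_iff r).mpr (Subgroup.subset_normalClosure hr)

lemma vA_pow : vA k n m ^ k = 1 := by
  have h := relVD k n m (r := FreeGroup.of 0 ^ k) (Set.mem_insert _ _)
  rwa [map_pow] at h

lemma vB_pow : vB k n m ^ n = 1 := by
  have h := relVD k n m (r := FreeGroup.of 1 ^ n)
    (Set.mem_insert_iff.mpr (Or.inr (Set.mem_insert _ _)))
  rwa [map_pow] at h

lemma vB_zpow : vB k n m ^ (n : ℤ) = 1 := by rw [zpow_natCast]; exact vB_pow k n m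

lemma vBA_pow : (vB k n m * (vA k n m)⁻¹) ^ m = 1 := by
  have h := relVD k n m (r := (FreeGroup.of 1 * (FreeGroup.of 0)⁻¹) ^ m)
    (Set.mem_insert_iff.mpr (Or.inr (Set.mem_insert_iff.mpr (Or.inr rfl))))
  rwa [map_pow, map_mul, map_inv] at h

lemma vAB_pow : (vA k n m * (vB k n m)⁻¹) ^ m = 1 := by
  have : vA k n m * (vB k n m)⁻¹ = (vB k n m * (vA k n m)⁻¹)⁻¹ := by
    rw [mul_inv_rev, inv_inv]
  rw [this, inv_pow, vBA_pow, inv_one]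

/-- the map `i ↦ b^{1-i} a b^{i-1}` -/
def phiFun (i : ZMod n) : VonDyck k n m :=
  vB k n m ^ (-(((i.val : ℤ)) - 1)) * vA k n m * vB k n m ^ (((i.val : ℤ)) - 1)

lemma lift_wWord [NeZero n] (l : ℕ) (i : ZMod n) :
    FreeGroup.lift (phiFun k n m) (wWord n l i)
      = vB k n m ^ (-((i.val : ℤ) - 1)) * (vA k n m * (vB k n m)⁻¹) ^ l *
          vB k n m ^ (((i.val : ℤ) - 1) + l) := by
  rw [wWord_eq, map_list_prod, List.map_map]
  rw [show List.map ((FreeGroup.lift (phiFun k n m)) ∘ fun (j : ℕ) => FreeGroup.of (i + (j : ZMod n)))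
        (List.range l)
      = List.map (fun (j : ℕ) => vB k n m ^ (-(((i.val : ℤ) - 1) + (j : ℕ))) * vA k n m *
          vB k n m ^ (((i.val : ℤ) - 1) + (j : ℕ))) (List.range l) from ?_]
  · exact tele _ _ l _
  · apply List.map_congr_left
    intro j _
    simp only [Function.comp_apply, FreeGroup.lift_apply_of, phiFun]
    have hc : (((((i + (j : ZMod n)).val : ℤ) - 1 : ℤ)) : ZMod n)
        = (((((i.val : ℤ) - 1) + (j : ℕ) : ℤ)) : ZMod n) := by
      push_cast [ZMod.natCast_zmod_val]
      ring
    have hc' : ((-(((i + (j : ZMod n)).val : ℤ) - 1) : ℤ) : ZMod n)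
        = ((-(((i.val : ℤ) - 1) + (j : ℕ)) : ℤ) : ZMod n) := by
      push_cast [ZMod.natCast_zmod_val]
      ring
    rw [zpow_congr (vB_zpow k n m) hc, zpow_congr (vB_zpow k n m) hc']

lemma hrelsT [NeZero n] : ∀ r ∈ wRels k n m, FreeGroup.lift (phiFun k n m) r = 1 := by
  rintro r (⟨i, rfl⟩ | ⟨i, rfl⟩)
  · rw [map_pow, FreeGroup.lift_apply_of]
    show (phiFun k n m i) ^ k = 1
    unfold phiFun
    rw [show vB k n m ^ (((i.val : ℤ)) - 1) = (vB k n m ^ (-(((i.val : ℤ)) - 1)))⁻¹ by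
      rw [← zpow_neg, neg_neg]]
    rw [conj_pow_eq, vA_pow]
    simp
  · rw [map_mul, map_inv, lift_wWord, lift_wWord, vAB_pow]
    generalize ((1 : ZMod n).val : ℤ) - 1 = t1
    generalize ((i.val : ℤ)) - 1 = t2
    group

/-- The homomorphism `TorGroup → VonDyck`. -/
def phiHom [NeZero n] : TorGroup k n m →* VonDyck k n m :=
  PresentedGroup.toGroup (hrelsT k n m)

lemma phiHom_mk [NeZero n] (r : FreeGroup (ZMod n)) :
    phiHom k n m (PresentedGroup.mk _ r) = FreeGroup.lift (phiFun k n m) r := rfl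

lemma phiHom_tx [NeZero n] (i : ZMod n) : phiHom k n m (tx k n m i) = phiFun k n m i := by
  unfold phiHom tx
  simp

lemma phiHom_delta [NeZero n] : phiHom k n m (txProd k n m m 1) = vB k n m ^ (m : ℤ) := by
  rw [txProd_eq_mk, phiHom_mk, lift_wWord, vAB_pow]
  generalize ((1 : ZMod n).val : ℤ) - 1 = t
  group

lemma phiHom_c [NeZero n] : phiHom k n m (txProd k n m n 1 ^ m) = 1 := by
  rw [c_eq_delta_pow, map_pow, phiHom_delta, ← zpow_natCast, ← zpow_mul]
  rw [zpow_congr (vB_zpow k n m) (show ((((m : ℤ) * (n : ℤ)) : ℤ) : ZMod n) = ((0 : ℤ) : ZMod n) by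
    rw [Int.cast_mul, Int.cast_natCast, Int.cast_natCast, Int.cast_zero, ZMod.natCast_self,
      mul_zero])]
  simp

end VD

section Quot
variable (k n m : ℕ)

/-- inverse of `m` mod `n` -/
def uu (n m : ℕ) : ℕ := ((m : ZMod n)⁻¹ : ZMod n).val

lemma hu [NeZero n] (hco : Nat.Coprime n m) : ((m * uu n m : ℕ) : ZMod n) = 1 := by
  push_cast [uu, ZMod.natCast_zmod_val]
  exact ZMod.coe_mul_inv_eq_one m hco.symm

abbrev QQ := TorGroup k n m ⧸ Subgroup.normalClosure {txProd k n m n 1 ^ m}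

def piQ : TorGroup k n m →* QQ k n m := QuotientGroup.mk' _

def yq (i : ZMod n) : QQ k n m := piQ k n m (tx k n m i)

def dq : QQ k n m := piQ k n m (txProd k n m m 1)

def bq : QQ k n m := dq k n m ^ uu n m

lemma dq_pow_n : dq k n m ^ n = 1 := by
  unfold dq
  rw [← map_pow, ← c_eq_delta_pow]
  exact (QuotientGroup.eq_one_iff _).mpr (Subgroup.subset_normalClosure rfl)

lemma yq_mul_dq (i : ZMod n) : yq k n m i * dq k n m = dq k n m * yq k n m (i + m) := by
  unfold yq dq
  rw [← map_mul, ← map_mul, delta_conj]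

lemma yq_dq_pow (i : ZMod n) : ∀ t : ℕ, yq k n m i * dq k n m ^ t
    = dq k n m ^ t * yq k n m (i + t * m) := by
  intro t
  induction t generalizing i with
  | zero => simp
  | succ t ih =>
    rw [pow_succ', ← mul_assoc, yq_mul_dq, mul_assoc, ih, ← mul_assoc, ← pow_succ']
    congr 2
    push_cast
    ring

lemma yq_bq [NeZero n] (hco : Nat.Coprime n m) (i : ZMod n) :
    yq k n m i * bq k n m = bq k n m * yq k n m (i + 1) := by
  unfold bq
  rw [yq_dq_pow]
  congr 2
  rw [show ((uu n m : ZMod n) * (m : ZMod n) = 1) by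
    have := hu n m hco; push_cast at this; rw [mul_comm]; exact this]

lemma yq_bq_pow [NeZero n] (hco : Nat.Coprime n m) (i : ZMod n) : ∀ t : ℕ,
    yq k n m i * bq k n m ^ t = bq k n m ^ t * yq k n m (i + t) := by
  intro t
  induction t generalizing i with
  | zero => simp
  | succ t ih =>
    rw [pow_succ', ← mul_assoc, yq_bq k n m hco, mul_assoc, ih, ← mul_assoc, ← pow_succ']
    congr 2
    push_cast
    ring

lemma yq_bq_zpow [NeZero n] (hco : Nat.Coprime n m) (i : ZMod n) : ∀ t : ℤ,
    yq k n m i * bq k n m ^ t = bq k n m ^ t * yq k n m (i + (t : ZMod n)) := by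
  intro t
  cases t with
  | ofNat s =>
    rw [Int.ofNat_eq_coe, zpow_natCast, yq_bq_pow k n m hco]
    norm_cast
  | negSucc s =>
    have h := yq_bq_pow k n m hco (i - (s + 1 : ℕ)) (s + 1)
    simp only [sub_add_cancel] at h
    rw [zpow_negSucc]
    have : i + ((Int.negSucc s : ℤ) : ZMod n) = i - ((s + 1 : ℕ) : ZMod n) := by
      rw [Int.cast_negSucc]
      push_cast
      ring
    rw [this]
    generalize hw : bq k n m ^ (s + 1) = w at h ⊢
    have h2 := congrArg (fun z => w⁻¹ * z * w⁻¹) h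
    simpa [mul_assoc] using h2.symm

lemma conj_yq [NeZero n] (hco : Nat.Coprime n m) (i : ZMod n) (t : ℤ) :
    bq k n m ^ (-t) * yq k n m i * bq k n m ^ t = yq k n m (i + (t : ZMod n)) := by
  rw [mul_assoc, yq_bq_zpow k n m hco, ← mul_assoc, zpow_neg, inv_mul_cancel, one_mul]

lemma bq_pow_m [NeZero n] (hn : 2 ≤ n) (hco : Nat.Coprime n m) :
    bq k n m ^ m = dq k n m := by
  haveI : Fact (1 < n) := ⟨hn⟩
  have hmod : (m * uu n m) % n = 1 := by
    have h1 : ((m * uu n m : ℕ) : ZMod n).val = (1 : ZMod n).val := by rw [hu n m hco]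
    rwa [ZMod.val_natCast, ZMod.val_one] at h1
  have hdiv : m * uu n m = n * ((m * uu n m) / n) + 1 := by
    conv_lhs => rw [← Nat.div_add_mod (m * uu n m) n]
    rw [hmod]
  unfold bq
  rw [← pow_mul, mul_comm (uu n m) m, hdiv, pow_add, pow_mul, dq_pow_n, one_pow, pow_one, one_mul]

lemma dq_as_prod : dq k n m
    = ((List.range m).map fun (j : ℕ) => yq k n m (1 + (j : ZMod n))).prod := by
  unfold dq yq
  conv_lhs => rw [txProd_eq k n m m 1]
  rw [map_list_prod, List.map_map]
  rfl

lemma rel3 [NeZero n] (hn : 2 ≤ n) (hco : Nat.Coprime n m) :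
    (bq k n m * (yq k n m 1)⁻¹) ^ m = 1 := by
  have key : dq k n m = (yq k n m 1 * (bq k n m)⁻¹) ^ m * dq k n m := by
    conv_lhs => rw [dq_as_prod]
    rw [show List.map (fun (j : ℕ) => yq k n m (1 + (j : ZMod n))) (List.range m)
        = List.map (fun (j : ℕ) => bq k n m ^ (-((0 : ℤ) + (j : ℕ))) * yq k n m 1 *
            bq k n m ^ ((0 : ℤ) + (j : ℕ))) (List.range m) from ?_]
    · rw [tele, zero_add, neg_zero, zpow_zero, one_mul, zpow_natCast, bq_pow_m k n m hn hco]
    · apply List.map_congr_left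
      intro j _
      rw [conj_yq k n m hco]
      push_cast
      ring_nf
  have h1 : (yq k n m 1 * (bq k n m)⁻¹) ^ m = 1 := by
    have := key.symm
    rwa [mul_eq_right] at this
  rw [show bq k n m * (yq k n m 1)⁻¹ = (yq k n m 1 * (bq k n m)⁻¹)⁻¹ by
    rw [mul_inv_rev, inv_inv], inv_pow, h1, inv_one]

lemma yq_pow_k (i : ZMod n) : yq k n m i ^ k = 1 := by
  unfold yq
  rw [← map_pow, tx_pow, map_one]

lemma bq_pow_n : bq k n m ^ n = 1 := by
  unfold bq
  rw [← pow_mul, mul_comm, pow_mul, dq_pow_n, one_pow]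

/-- the map `Fin 2 → QQ` -/
def psiFun : Fin 2 → QQ k n m := ![yq k n m 1, bq k n m]

lemma hrelsVD [NeZero n] (hn : 2 ≤ n) (hco : Nat.Coprime n m) :
    ∀ r ∈ vdRels k n m, FreeGroup.lift (psiFun k n m) r = 1 := by
  intro r hr
  rcases hr with rfl | rfl | rfl
  · rw [map_pow, FreeGroup.lift_apply_of]
    show (psiFun k n m 0) ^ k = 1
    simp only [psiFun, Matrix.cons_val_zero]
    exact yq_pow_k k n m 1
  · rw [map_pow, FreeGroup.lift_apply_of]
    show (psiFun k n m 1) ^ n = 1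
    simp only [psiFun, Matrix.cons_val_one, Matrix.head_cons]
    exact bq_pow_n k n m
  · rw [map_pow, map_mul, map_inv, FreeGroup.lift_apply_of, FreeGroup.lift_apply_of]
    show (psiFun k n m 1 * (psiFun k n m 0)⁻¹) ^ m = 1
    simp only [psiFun, Matrix.cons_val_one, Matrix.head_cons, Matrix.cons_val_zero]
    exact rel3 k n m hn hco

/-- The homomorphism `VonDyck → QQ`. -/
def psiHom [NeZero n] (hn : 2 ≤ n) (hco : Nat.Coprime n m) : VonDyck k n m →* QQ k n m :=
  PresentedGroup.toGroup (hrelsVD k n m hn hco)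

lemma psiHom_a [NeZero n] (hn : 2 ≤ n) (hco : Nat.Coprime n m) :
    psiHom k n m hn hco (vA k n m) = yq k n m 1 := by
  unfold psiHom vA
  rw [PresentedGroup.toGroup.of]
  rfl

lemma psiHom_b [NeZero n] (hn : 2 ≤ n) (hco : Nat.Coprime n m) :
    psiHom k n m hn hco (vB k n m) = bq k n m := by
  unfold psiHom vB
  rw [PresentedGroup.toGroup.of]
  rfl

end Quot

section Final
variable (k n m : ℕ)

/-- The homomorphism `QQ → VonDyck` induced by `phiHom`. -/
def phiQ [NeZero n] : QQ k n m →* VonDyck k n m :=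
  QuotientGroup.lift _ (phiHom k n m) (fun x hx => by
    have hker : Subgroup.normalClosure {txProd k n m n 1 ^ m} ≤ (phiHom k n m).ker :=
      Subgroup.normalClosure_le_normal (by
        rw [Set.singleton_subset_iff]
        exact MonoidHom.mem_ker.mpr (phiHom_c k n m))
    exact MonoidHom.mem_ker.mp (hker hx))

lemma phiQ_mk [NeZero n] (g : TorGroup k n m) :
    phiQ k n m (QuotientGroup.mk g) = phiHom k n m g := rfl

lemma left_inv_comp [NeZero n] (hn : 2 ≤ n) (hco : Nat.Coprime n m) :
    (psiHom k n m hn hco).comp (phiQ k n m) = MonoidHom.id (QQ k n m) := by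
  apply QuotientGroup.monoidHom_ext
  apply PresentedGroup.ext
  intro i
  show psiHom k n m hn hco (phiQ k n m (QuotientGroup.mk (tx k n m i))) = yq k n m i
  rw [phiQ_mk, phiHom_tx]
  unfold phiFun
  rw [map_mul, map_mul, map_zpow, map_zpow, psiHom_a, psiHom_b]
  rw [conj_yq k n m hco]
  congr 1
  push_cast [ZMod.natCast_zmod_val]
  ring

lemma right_inv_comp [NeZero n] (hn : 2 ≤ n) (hco : Nat.Coprime n m) :
    (phiQ k n m).comp (psiHom k n m hn hco) = MonoidHom.id (VonDyck k n m) := by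
  haveI : Fact (1 < n) := ⟨hn⟩
  apply PresentedGroup.ext
  intro x
  fin_cases x
  · show phiQ k n m (psiHom k n m hn hco (vA k n m)) = vA k n m
    rw [psiHom_a]
    show phiQ k n m (QuotientGroup.mk (tx k n m 1)) = vA k n m
    rw [phiQ_mk, phiHom_tx]
    unfold phiFun
    rw [ZMod.val_one]
    simp
  · show phiQ k n m (psiHom k n m hn hco (vB k n m)) = vB k n m
    rw [psiHom_b]
    show phiQ k n m (dq k n m ^ uu n m) = vB k n m
    rw [map_pow]
    have hd : phiQ k n m (dq k n m) = vB k n m ^ (m : ℤ) := by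
      show phiQ k n m (QuotientGroup.mk (txProd k n m m 1)) = _
      rw [phiQ_mk, phiHom_delta]
    rw [hd, ← zpow_natCast, ← zpow_mul]
    rw [zpow_congr (vB_zpow k n m) (show (((m : ℤ) * (uu n m : ℤ) : ℤ) : ZMod n)
        = ((1 : ℤ) : ZMod n) by
      have := hu n m hco
      push_cast at this ⊢
      rw [this])]
    simp

end Final

end Stmt13Aux

open Stmt13Aux

/-- Let `k, n, m ≥ 2` with `n < m` and `n, m` coprime.  The quotient of the toric
reflection group `W(k,n,m)` by the normal subgroup generated by `c = (x₁x₂⋯xₙ)^m` is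
isomorphic to `W⁺_{k,n,m} = ⟨a, b | a^k = b^n = (ba⁻¹)^m = 1⟩`, via the map sending
`x_{i+1}` to `b^{-i} a b^{i}` (i.e. `xᵢ ↦ b^{-i+1} a b^{i-1}`). -/
theorem stmt13 (k n m : ℕ) (hk : 2 ≤ k) (hn : 2 ≤ n) (hm : 2 ≤ m) (hnm : n < m)
    (hco : Nat.Coprime n m) :
    ∃ φ : (TorGroup k n m ⧸ Subgroup.normalClosure {txProd k n m n 1 ^ m}) ≃*
        VonDyck k n m,
      ∀ i : ℕ,
        φ (QuotientGroup.mk (tx k n m ((i : ZMod n) + 1))) =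
          vB k n m ^ (-(i : ℤ)) * vA k n m * vB k n m ^ (i : ℤ) := by
  haveI : NeZero n := ⟨by omega⟩
  refine ⟨MonoidHom.toMulEquiv (phiQ k n m) (psiHom k n m hn hco)
    (left_inv_comp k n m hn hco) (right_inv_comp k n m hn hco), ?_⟩
  intro i
  show phiQ k n m (QuotientGroup.mk (tx k n m ((i : ZMod n) + 1))) = _
  rw [phiQ_mk, phiHom_tx]
  unfold phiFun
  rw [zpow_congr (vB_zpow k n m) (show ((((((i : ZMod n) + 1).val : ℤ) - 1 : ℤ)) : ZMod n)
      = (((i : ℤ)) : ZMod n) by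
    push_cast [ZMod.natCast_zmod_val]
    ring)]
  rw [zpow_congr (vB_zpow k n m) (show (((-((((i : ZMod n) + 1).val : ℤ) - 1) : ℤ)) : ZMod n)
      = (((-(i : ℤ)) : ℤ) : ZMod n) by
    push_cast [ZMod.natCast_zmod_val]
    ring)]
end

section
/- In the group G = ⟨s, t, u | s^k = t^n = u^m = 1, stu = tus = ust⟩, the element (st)^{nm} equals (stu)^{nm}, and in particular (x₁x₂⋯xₙ)^m = (stu)^{nm} where xᵢ = t^{i-1} s t^{1-i} and indices run over i = 1, ..., n. -/

lemma jrel_mem {a b c : ℕ} {r : FreeGroup (Fin 3)} (h : r ∈ jRels a b c) :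
    (QuotientGroup.mk r : JGroup a b c) = 1 := by
  rw [QuotientGroup.eq_one_iff]
  exact Subgroup.subset_normalClosure h

lemma jT_pow {a b c : ℕ} : (jT a b c) ^ b = 1 := by
  have := jrel_mem (a := a) (b := b) (c := c)
    (r := FreeGroup.of 1 ^ b) (by simp [jRels])
  simpa [jT, PresentedGroup.of] using (show PresentedGroup.mk (jRels a b c) _ = 1 from this)

lemma jU_pow {a b c : ℕ} : (jU a b c) ^ c = 1 := by
  have := jrel_mem (a := a) (b := b) (c := c)
    (r := FreeGroup.of 2 ^ c) (by simp [jRels])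
  simpa [jU, PresentedGroup.of] using (show PresentedGroup.mk (jRels a b c) _ = 1 from this)

lemma jComm {a b c : ℕ} :
    jS a b c * jT a b c * jU a b c = jU a b c * (jS a b c * jT a b c) := by
  have := jrel_mem (a := a) (b := b) (c := c)
    (r := (FreeGroup.of 0 * FreeGroup.of 1 * FreeGroup.of 2) *
      (FreeGroup.of 2 * FreeGroup.of 0 * FreeGroup.of 1)⁻¹) (by simp [jRels])
  have h : jS a b c * jT a b c * jU a b c *
      (jU a b c * jS a b c * jT a b c)⁻¹ = 1 := by
    simpa [jS, jT, jU, PresentedGroup.of] using (show PresentedGroup.mk (jRels a b c) _ = 1 from this)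
  have := mul_eq_one_iff_eq_inv.mp h
  rw [inv_inv] at this
  rw [this]; group

lemma telescope {G : Type*} [Group G] (s t : G) (n : ℕ) :
    (((List.range n).map fun i => t ^ i * s * (t ^ i)⁻¹)).prod
      = (s * t) ^ n * (t ^ n)⁻¹ := by
  induction n with
  | zero => simp
  | succ n ih =>
      rw [List.range_succ, List.map_append, List.prod_append, ih]
      simp [pow_succ]
      group

/-- In `G = ⟨s, t, u | s^k = t^n = u^m = 1, stu = tus = ust⟩`, we have
`(st)^{nm} = (stu)^{nm}`, and in particular `(x₁x₂⋯xₙ)^m = (stu)^{nm}` where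
`xᵢ = t^{i-1} s t^{1-i}` for `i = 1, …, n`. -/
theorem stmt14 (k n m : ℕ) (hk : 2 ≤ k) (hn : 2 ≤ n) (hm : 2 ≤ m) :
    (jS k n m * jT k n m) ^ (n * m) = (jS k n m * jT k n m * jU k n m) ^ (n * m) ∧
    (((List.range n).map fun i => jT k n m ^ i * jS k n m * (jT k n m ^ i)⁻¹)).prod ^ m =
      (jS k n m * jT k n m * jU k n m) ^ (n * m) := by
  set s := jS k n m
  set t := jT k n m
  set u := jU k n m
  have hcomm : Commute (s * t) u := jComm (a := k) (b := n) (c := m)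
  have h1 : (s * t) ^ (n * m) = (s * t * u) ^ (n * m) := by
    rw [hcomm.mul_pow, mul_comm n m, pow_mul u, jU_pow, one_pow, mul_one]
  refine ⟨h1, ?_⟩
  rw [telescope s t n, jT_pow, inv_one, mul_one, ← pow_mul, h1]
end
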